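/- For all real t with 0 < t ≤ 1 and all v with 0 ≤ v ≤ 1, ((1-v) + v·t)/t^v ≤ 1 + (v·(1-v)/2)·(1/t - 1)². -/

import Mathlib

open Real

lemma lemA {w u : ℝ} (hw0 : 0 ≤ w) (hw1 : w ≤ 1) (hu : 0 ≤ u) :
    1 + w * u - w * (1 - w) / 2 * u ^ 2 ≤ (1 + u) ^ w := by
  set g : ℝ → ℝ := fun s => (1 + s) ^ w - w * s + w * (1 - w) / 2 * s ^ 2 with hg
  have hder : ∀ s : ℝ, 0 < s →
      HasDerivAt g (w * (1 + s) ^ (w - 1) - w + w * (1 - w) / 2 * (2 * s)) s := by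
    intro s hs
    have h1 : (0:ℝ) < 1 + s := by linarith
    have hrp : HasDerivAt (fun y : ℝ => (1 + y) ^ w) (w * (1 + s) ^ (w - 1) * 1) s := by
      have := (Real.hasDerivAt_rpow_const (x := 1 + s) (p := w) (Or.inl h1.ne'))
      exact this.comp s ((hasDerivAt_id s).const_add 1)
    have h2 : HasDerivAt (fun y : ℝ => w * y) w s := by
      simpa using (hasDerivAt_id s).const_mul w
    have h3 : HasDerivAt (fun y : ℝ => w * (1 - w) / 2 * y ^ 2)
        (w * (1 - w) / 2 * (2 * s)) s := by
      simpa using ((hasDerivAt_pow 2 s).const_mul (w * (1 - w) / 2))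
    rw [mul_one] at hrp
    exact (hrp.sub h2).add h3
  have hmono : MonotoneOn g (Set.Ici (0:ℝ)) := by
    apply monotoneOn_of_deriv_nonneg (convex_Ici 0)
    · apply ContinuousOn.add
      apply ContinuousOn.sub
      · exact (continuousOn_const.add continuousOn_id).rpow_const (fun x hx => Or.inr hw0)
      · fun_prop
      · fun_prop
    · intro s hs
      rw [interior_Ici] at hs
      exact ((hder s hs).differentiableAt).differentiableWithinAt
    · intro s hs
      rw [interior_Ici] at hs
      have hs' : 0 < s := hs
      rw [(hder s hs').deriv]
      -- need (1+s)^(w-1) ≥ 1 - (1-w) s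
      have h1 : (0:ℝ) < 1 + s := by linarith
      have hB : (1 + s) ^ (1 - w) ≤ 1 + (1 - w) * s :=
        rpow_one_add_le_one_add_mul_self (by linarith : (-1:ℝ) ≤ s) (by linarith) (by linarith)
      have hP : (0:ℝ) < (1 + s) ^ (1 - w) := rpow_pos_of_pos h1 _
      have hEq : (1 + s) ^ (w - 1) = ((1 + s) ^ (1 - w))⁻¹ := by
        rw [← Real.rpow_neg h1.le]; ring_nf
      have hinv : (1 + s) ^ (1 - w) * ((1 + s) ^ (1 - w))⁻¹ = 1 := mul_inv_cancel₀ hP.ne'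
      have hkey : 1 - (1 - w) * s ≤ ((1 + s) ^ (1 - w))⁻¹ := by
        nlinarith [mul_le_mul_of_nonneg_right hB (inv_nonneg.2 hP.le), hinv, sq_nonneg ((1-w)*s), inv_pos.2 hP, mul_nonneg (sub_nonneg.2 hw1) hs'.le]
      rw [hEq]
      nlinarith [hkey, hw0, hs'.le]
  have h0 : g 0 ≤ g u := hmono (Set.mem_Ici.2 le_rfl) hu hu
  simp only [hg] at h0
  norm_num [Real.one_rpow] at h0
  nlinarith [h0]

lemma lemB {v u : ℝ} (hv0 : 0 ≤ v) (hv1 : v ≤ 1) (hu : 0 ≤ u) :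
    1 + (1 - v) * u ≤ (1 + v * (1 - v) / 2 * u ^ 2) * (1 + u) ^ (1 - v) := by
  have h1 : (0:ℝ) < 1 + u := by linarith
  have hc : 0 ≤ v * (1 - v) / 2 := by nlinarith
  have hR : (0:ℝ) ≤ 1 + v * (1 - v) / 2 * u ^ 2 := by positivity
  rcases le_total u 1 with hu1 | hu1
  · -- use lemA with w := 1 - v
    have hA := lemA (by linarith : 0 ≤ 1 - v) (by linarith) hu
    have h2 : (1 + v * (1 - v) / 2 * u ^ 2) * (1 + (1 - v) * u - (1 - v) * (1 - (1 - v)) / 2 * u ^ 2)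
        ≤ (1 + v * (1 - v) / 2 * u ^ 2) * (1 + u) ^ (1 - v) :=
      mul_le_mul_of_nonneg_left hA hR
    have hf : (0:ℝ) ≤ (1 - v) * (1 - v * u / 2) :=
      mul_nonneg (by linarith) (by nlinarith)
    have h5 : (0:ℝ) ≤ v * (1 - v) / 2 * u ^ 3 * ((1 - v) - v * (1 - v) / 2 * u) := by
      have he : (1 - v) - v * (1 - v) / 2 * u = (1 - v) * (1 - v * u / 2) := by ring
      rw [he]
      exact mul_nonneg (mul_nonneg hc (pow_nonneg hu 3)) hf
    nlinarith [h2, h5]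
  · -- use Bernoulli upper bound
    have hB : (1 + u) ^ v ≤ 1 + v * u :=
      rpow_one_add_le_one_add_mul_self (by linarith) hv0 hv1
    have hP : (0:ℝ) < (1 + u) ^ v := rpow_pos_of_pos h1 _
    have hQ : (0:ℝ) < 1 + v * u := by nlinarith
    have hEq : (1 + u) ^ (1 - v) = (1 + u) / (1 + u) ^ v := by
      rw [Real.rpow_sub h1, Real.rpow_one]
    have h3 : (1 + u) / (1 + v * u) ≤ (1 + u) / (1 + u) ^ v := by
      gcongr
    have h4 : 1 + (1 - v) * u ≤ (1 + v * (1 - v) / 2 * u ^ 2) * ((1 + u) / (1 + v * u)) := by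
      rw [mul_div_assoc', le_div_iff₀ hQ]
      nlinarith [mul_nonneg (mul_nonneg hv0 (by linarith : 0 ≤ 1 - v)) (sq_nonneg u),
        mul_nonneg (mul_nonneg (mul_nonneg hv0 (by linarith : 0 ≤ 1 - v)) (sq_nonneg u)) (by linarith : 0 ≤ u - 1)]
    calc 1 + (1 - v) * u ≤ (1 + v * (1 - v) / 2 * u ^ 2) * ((1 + u) / (1 + v * u)) := h4
      _ ≤ (1 + v * (1 - v) / 2 * u ^ 2) * ((1 + u) / (1 + u) ^ v) :=
          mul_le_mul_of_nonneg_left h3 hR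
      _ = (1 + v * (1 - v) / 2 * u ^ 2) * (1 + u) ^ (1 - v) := by rw [hEq]


theorem stmt16 (t v : ℝ) (ht0 : 0 < t) (ht1 : t ≤ 1) (hv0 : 0 ≤ v) (hv1 : v ≤ 1) :
    ((1 - v) + v * t) / t ^ v ≤ 1 + (v * (1 - v) / 2) * (1 / t - 1) ^ 2 := by
  set u : ℝ := 1 / t - 1 with hu_def
  have hu : 0 ≤ u := by
    have h : 1 ≤ 1 / t := by rw [le_div_iff₀ ht0]; linarith
    simp only [hu_def]; linarith
  have h1u : 1 + u = 1 / t := by simp [hu_def]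
  have h1up : (0:ℝ) < 1 + u := by rw [h1u]; positivity
  have htu : t * (1 + u) = 1 := by rw [h1u]; field_simp
  have htv : (0:ℝ) < t ^ v := rpow_pos_of_pos ht0 v
  rw [div_le_iff₀ htv]
  have key := lemB hv0 hv1 hu
  have e2 : t * (1 + u) ^ (1 - v) = t ^ v := by
    have ht : t = (1 + u)⁻¹ := by
      field_simp [h1u]
      exact htu
    have hPne : (1 + u) ^ v ≠ 0 := (rpow_pos_of_pos h1up v).ne'
    rw [ht, Real.inv_rpow h1up.le, Real.rpow_sub h1up, Real.rpow_one]
    field_simp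
  have e3 : (1 - v) + v * t = t * (1 + (1 - v) * u) := by
    rw [hu_def]
    field_simp
    ring
  calc (1 - v) + v * t = t * (1 + (1 - v) * u) := e3
    _ ≤ t * ((1 + v * (1 - v) / 2 * u ^ 2) * (1 + u) ^ (1 - v)) :=
        mul_le_mul_of_nonneg_left key ht0.le
    _ = (1 + v * (1 - v) / 2 * u ^ 2) * (t * (1 + u) ^ (1 - v)) := by ring
    _ = (1 + v * (1 - v) / 2 * u ^ 2) * t ^ v := by rw [e2]
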